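/- Let u be a strictly convex continuous function on B₂(0) ⊆ ℝⁿ. Define for p ∈ B₁(0) the outer section S^u_r(p) = { x ∈ B₁(0) : u(x) < u(p) + sup_{y ∈ ∂u(p)} (x−p)·y + r² }, where ∂u(p) is the subdifferential. Then lim_{r→0} sup_{|p|<1} diam S^u_r(p) = 0; that is, for every ε > 0 there is r₀ > 0 such that for all 0 < r < r₀ and all p ∈ B₁(0), any x ∈ S^u_r(p) satisfies |x − p| < ε. -/

import Mathlib

open Metric Set

/-- The subdifferential of `u` at `p`, with respect to the domain `B₂(0)`. -/
def subdiff {n : ℕ} (u : EuclideanSpace ℝ (Fin n) → ℝ) (p : EuclideanSpace ℝ (Fin n)) :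
    Set (EuclideanSpace ℝ (Fin n)) :=
  {y | ∀ x ∈ ball (0 : EuclideanSpace ℝ (Fin n)) 2, u p + (inner ℝ (x - p) y : ℝ) ≤ u x}

/-- The outer section `S^u_r(p)` defined via the subdifferential. -/
def outerSection {n : ℕ} (u : EuclideanSpace ℝ (Fin n) → ℝ) (r : ℝ)
    (p : EuclideanSpace ℝ (Fin n)) : Set (EuclideanSpace ℝ (Fin n)) :=
  {x ∈ ball (0 : EuclideanSpace ℝ (Fin n)) 1 |
    u x < u p + sSup ((fun y => (inner ℝ (x - p) y : ℝ)) '' subdiff u p) + r ^ 2}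

/-- A convex continuous function on the open ball has a subgradient at every interior point. -/
lemma subdiff_nonempty {n : ℕ} {u : EuclideanSpace ℝ (Fin n) → ℝ}
    (hu : ConvexOn ℝ (ball 0 2) u) (hc : ContinuousOn u (ball 0 2))
    {p : EuclideanSpace ℝ (Fin n)} (hp : p ∈ ball (0 : EuclideanSpace ℝ (Fin n)) 2) :
    (subdiff u p).Nonempty := by
  classical
  set s : Set (EuclideanSpace ℝ (Fin n) × ℝ) :=
    {q | q.1 ∈ ball (0 : EuclideanSpace ℝ (Fin n)) 2 ∧ u q.1 < q.2} with hs_def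
  have hsopen : IsOpen s := by
    have h1 : ContinuousOn (fun q : EuclideanSpace ℝ (Fin n) × ℝ => u q.1 - q.2)
        ((ball (0 : EuclideanSpace ℝ (Fin n)) 2) ×ˢ (univ : Set ℝ)) := by
      apply ContinuousOn.sub
      · exact hc.comp continuous_fst.continuousOn
          (fun q (hq : q ∈ _ ×ˢ _) => hq.1)
      · exact continuous_snd.continuousOn
    have h2 := h1.isOpen_inter_preimage (isOpen_ball.prod isOpen_univ)
      (isOpen_Iio (a := (0:ℝ)))
    convert h2 using 1
    ext q
    simp only [hs_def, mem_setOf_eq, mem_inter_iff, mem_prod, mem_univ, and_true,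
      mem_preimage, mem_Iio, sub_neg]
  have hsconv : Convex ℝ s := hu.convex_strict_epigraph
  have hps : (p, u p) ∉ s := fun h => lt_irrefl _ h.2
  obtain ⟨f, hf⟩ := geometric_hahn_banach_open_point hsconv hsopen hps
  set c : ℝ := f (0, 1) with hc_def
  set g : EuclideanSpace ℝ (Fin n) →L[ℝ] ℝ :=
    f.comp (ContinuousLinearMap.inl ℝ (EuclideanSpace ℝ (Fin n)) ℝ) with hg_def
  have hft : ∀ (x : EuclideanSpace ℝ (Fin n)) (t : ℝ), f (x, t) = g x + t * c := by
    intro x t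
    have hxt : (x, t) = (x, (0 : ℝ)) + t • ((0 : EuclideanSpace ℝ (Fin n)), (1 : ℝ)) := by
      simp [Prod.ext_iff]
    rw [hxt, map_add, map_smul]
    simp only [hg_def, hc_def, ContinuousLinearMap.comp_apply,
      ContinuousLinearMap.inl_apply, smul_eq_mul]
    try ring
  have hcneg : c < 0 := by
    have h1 : (p, u p + 1) ∈ s := ⟨hp, by simp⟩
    have h2 := hf _ h1
    rw [hft, hft] at h2
    nlinarith
  have key : ∀ x ∈ ball (0 : EuclideanSpace ℝ (Fin n)) 2,
      g x + u x * c ≤ g p + u p * c := by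
    intro x hx
    by_contra h
    push_neg at h
    set δ : ℝ := (g x + u x * c - (g p + u p * c)) / (-c) with hδ
    have hδpos : 0 < δ := div_pos (by linarith) (by linarith)
    have h1 : (x, u x + δ) ∈ s := ⟨hx, show u x < u x + δ by linarith⟩
    have h2 := hf _ h1
    rw [hft, hft] at h2
    have hc0 : c ≠ 0 := ne_of_lt hcneg
    have hdc : δ * c = -(g x + u x * c - (g p + u p * c)) := by
      rw [hδ, div_mul_eq_mul_div, mul_div_assoc, div_neg, div_self hc0, mul_neg, mul_one]
    nlinarith
  set v : EuclideanSpace ℝ (Fin n) :=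
    (InnerProductSpace.toDual ℝ (EuclideanSpace ℝ (Fin n))).symm g with hv
  have hvx : ∀ x : EuclideanSpace ℝ (Fin n), (inner ℝ v x : ℝ) = g x := fun x =>
    InnerProductSpace.toDual_symm_apply
  refine ⟨(-c)⁻¹ • v, ?_⟩
  intro x hx
  have h1 := key x hx
  have h2 : (inner ℝ (x - p) ((-c)⁻¹ • v) : ℝ) = (-c)⁻¹ * (g x - g p) := by
    rw [real_inner_smul_right, real_inner_comm, hvx, map_sub]
  rw [h2]
  have hcpos : 0 < -c := by linarith
  have hc0 : c ≠ 0 := ne_of_lt hcneg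
  have h4 : c * (-c)⁻¹ = -1 := by
    rw [inv_neg, mul_neg, mul_inv_cancel₀ hc0]
  have h5 : g x - g p ≤ (u p - u x) * c := by nlinarith [h1]
  have h6 := mul_le_mul_of_nonneg_left h5 (le_of_lt (inv_pos.2 hcpos))
  have h7 : (-c)⁻¹ * ((u p - u x) * c) = u x - u p := by
    field_simp
    try ring
  linarith [h6, h7]

/-- Uniform bound on the supremum of subgradient inner products via the midpoint. -/
lemma sSup_subdiff_le {n : ℕ} {u : EuclideanSpace ℝ (Fin n) → ℝ}
    (hu : ConvexOn ℝ (ball 0 2) u) (hc : ContinuousOn u (ball 0 2))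
    {p x : EuclideanSpace ℝ (Fin n)} (hp : p ∈ ball (0 : EuclideanSpace ℝ (Fin n)) 1)
    (hx : x ∈ ball (0 : EuclideanSpace ℝ (Fin n)) 1) :
    sSup ((fun y => (inner ℝ (x - p) y : ℝ)) '' subdiff u p)
      ≤ 2 * (u ((1/2 : ℝ) • p + (1/2 : ℝ) • x) - u p) := by
  have hp2 : p ∈ ball (0 : EuclideanSpace ℝ (Fin n)) 2 :=
    mem_ball_zero_iff.2 (lt_trans (mem_ball_zero_iff.1 hp) one_lt_two)
  have hm2 : (1/2 : ℝ) • p + (1/2 : ℝ) • x ∈ ball (0 : EuclideanSpace ℝ (Fin n)) 2 := by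
    rw [mem_ball_zero_iff]
    calc ‖(1/2 : ℝ) • p + (1/2 : ℝ) • x‖ ≤ ‖(1/2 : ℝ) • p‖ + ‖(1/2 : ℝ) • x‖ := norm_add_le _ _
      _ = (1/2) * ‖p‖ + (1/2) * ‖x‖ := by
          rw [norm_smul, norm_smul]; simp
      _ < 2 := by
          have := mem_ball_zero_iff.1 hp
          have := mem_ball_zero_iff.1 hx
          nlinarith
  obtain ⟨y₀, hy₀⟩ := subdiff_nonempty hu hc hp2
  apply csSup_le (Set.Nonempty.image _ ⟨y₀, hy₀⟩)
  rintro _ ⟨y, hy, rfl⟩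
  have := hy _ hm2
  have hmid : ((1/2 : ℝ) • p + (1/2 : ℝ) • x) - p = (1/2 : ℝ) • (x - p) := by
    rw [smul_sub]
    module
  rw [hmid, real_inner_smul_left] at this
  linarith

/-- sections of a strictly convex function shrink to their centers,
uniformly in the center. -/
theorem diam_section_tendsto_zero {n : ℕ}
    (u : EuclideanSpace ℝ (Fin n) → ℝ)
    (hu : StrictConvexOn ℝ (ball 0 2) u) (hc : ContinuousOn u (ball 0 2)) :
    ∀ ε > 0, ∃ r₀ > 0, ∀ r : ℝ, 0 < r → r < r₀ →
      ∀ p ∈ ball (0 : EuclideanSpace ℝ (Fin n)) 1,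
        ∀ x ∈ outerSection u r p, ‖x - p‖ < ε := by
  intro ε hε
  have hsub : closedBall (0 : EuclideanSpace ℝ (Fin n)) 1 ⊆
      ball (0 : EuclideanSpace ℝ (Fin n)) 2 := closedBall_subset_ball one_lt_two
  set B : Set (EuclideanSpace ℝ (Fin n) × EuclideanSpace ℝ (Fin n)) :=
    (closedBall (0 : EuclideanSpace ℝ (Fin n)) 1) ×ˢ
      (closedBall (0 : EuclideanSpace ℝ (Fin n)) 1) with hB_def
  set G : EuclideanSpace ℝ (Fin n) × EuclideanSpace ℝ (Fin n) → ℝ :=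
    fun q => u q.1 + u q.2 - 2 * u ((1/2 : ℝ) • q.1 + (1/2 : ℝ) • q.2) with hG_def
  set K : Set (EuclideanSpace ℝ (Fin n) × EuclideanSpace ℝ (Fin n)) :=
    {q ∈ B | ε ≤ ‖q.2 - q.1‖} with hK_def
  have hmid_mem : ∀ q ∈ B,
      (1/2 : ℝ) • q.1 + (1/2 : ℝ) • q.2 ∈ ball (0 : EuclideanSpace ℝ (Fin n)) 2 := by
    rintro ⟨q1, q2⟩ hq
    rw [hB_def, Set.mem_prod] at hq
    apply hsub
    rw [mem_closedBall_zero_iff]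
    calc ‖(1/2 : ℝ) • q1 + (1/2 : ℝ) • q2‖ ≤ ‖(1/2 : ℝ) • q1‖ + ‖(1/2 : ℝ) • q2‖ :=
          norm_add_le _ _
      _ = (1/2) * ‖q1‖ + (1/2) * ‖q2‖ := by rw [norm_smul, norm_smul]; simp
      _ ≤ 1 := by
          have h1 := mem_closedBall_zero_iff.1 hq.1
          have h2 := mem_closedBall_zero_iff.1 hq.2
          nlinarith
  have hGcont : ContinuousOn G B := by
    have hf1 : ContinuousOn (u ∘ Prod.fst) B :=
      hc.comp continuous_fst.continuousOn (by
        rintro ⟨q1, q2⟩ hq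
        rw [hB_def, Set.mem_prod] at hq
        exact hsub hq.1)
    have hf2 : ContinuousOn (u ∘ Prod.snd) B :=
      hc.comp continuous_snd.continuousOn (by
        rintro ⟨q1, q2⟩ hq
        rw [hB_def, Set.mem_prod] at hq
        exact hsub hq.2)
    have hf3 : ContinuousOn
        (u ∘ (fun q : EuclideanSpace ℝ (Fin n) × EuclideanSpace ℝ (Fin n) =>
          (1/2 : ℝ) • q.1 + (1/2 : ℝ) • q.2)) B :=
      hc.comp (by fun_prop) hmid_mem
    exact (hf1.add hf2).sub (continuousOn_const.mul hf3)
  have hKB : K ⊆ B := fun q hq => hq.1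
  have hKcompact : IsCompact K := by
    apply IsCompact.of_isClosed_subset
      ((isCompact_closedBall (0 : EuclideanSpace ℝ (Fin n)) 1).prod
        (isCompact_closedBall (0 : EuclideanSpace ℝ (Fin n)) 1))
    · exact (isClosed_closedBall.prod isClosed_closedBall).inter
        (isClosed_le continuous_const (continuous_snd.sub continuous_fst).norm)
    · exact hKB
  by_cases hKne : K.Nonempty
  · obtain ⟨q₀, hq₀K, hq₀min⟩ := hKcompact.exists_isMinOn hKne (hGcont.mono hKB)
    have hδpos : 0 < G q₀ := by
      have hq1 : q₀.1 ∈ ball (0 : EuclideanSpace ℝ (Fin n)) 2 := hsub hq₀K.1.1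
      have hq2 : q₀.2 ∈ ball (0 : EuclideanSpace ℝ (Fin n)) 2 := hsub hq₀K.1.2
      have hne : q₀.1 ≠ q₀.2 := by
        intro h
        have h2 := hq₀K.2
        rw [h] at h2
        simp only [sub_self, norm_zero] at h2
        linarith
      have hsc := hu.2 hq1 hq2 hne (by norm_num : (0:ℝ) < 1/2)
        (by norm_num : (0:ℝ) < 1/2) (by norm_num)
      rw [smul_eq_mul, smul_eq_mul] at hsc
      simp only [hG_def]
      linarith
    refine ⟨Real.sqrt (G q₀), Real.sqrt_pos.2 hδpos, ?_⟩
    intro r hr hrlt p hp x hxsec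
    by_contra hcon
    push_neg at hcon
    obtain ⟨hx1, hxlt⟩ := hxsec
    have hq : (p, x) ∈ K :=
      ⟨⟨ball_subset_closedBall hp, ball_subset_closedBall hx1⟩, hcon⟩
    have hGpx : G q₀ ≤ G (p, x) := hq₀min hq
    have hMle := sSup_subdiff_le hu.convexOn hc hp hx1
    have hr2 : r ^ 2 < G q₀ := by
      nlinarith [Real.sq_sqrt hδpos.le, Real.sqrt_nonneg (G q₀)]
    simp only [hG_def] at hGpx
    have t1 : u x + u p - 2 * u ((1/2 : ℝ) • p + (1/2 : ℝ) • x) < r ^ 2 := by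
      linarith [hxlt, hMle]
    have t2 : G q₀ ≤ u x + u p - 2 * u ((1/2 : ℝ) • p + (1/2 : ℝ) • x) := by
      refine le_trans hGpx ?_
      ring_nf
      exact le_refl _
    exact absurd hr2 (lt_asymm (lt_of_le_of_lt t2 t1))
  · refine ⟨1, one_pos, ?_⟩
    intro r hr hrlt p hp x hxsec
    by_contra hcon
    push_neg at hcon
    exact hKne ⟨(p, x),
      ⟨⟨ball_subset_closedBall hp, ball_subset_closedBall hxsec.1⟩, hcon⟩⟩
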